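/- The function Φ is twice differentiable on ℝ and for every ξ ∈ ℝ its second derivative is given by Φ″(ξ) = (B − α²) · (−3α²ξ⁴ − 2Bξ² + B) / ((1+ξ²)^{5/2}·(B+α²ξ²)^{3/2}). -/

import Mathlib

private lemma rpow_succ' (x : ℝ) (hx : 0 < x) (p : ℝ) : x ^ (p + 1) = x * x ^ p := by
  rw [Real.rpow_add hx, Real.rpow_one]; ring

private lemma step1 (B α c : ℝ) (hB : 0 < B) (ξ : ℝ) :
    HasDerivAt (fun ξ : ℝ => c * ξ - (B + α ^ 2 * ξ ^ 2) ^ ((1:ℝ)/2) * (1 + ξ ^ 2) ^ (-(1:ℝ)/2))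
      (c - (α ^ 2 - B) * ξ * (1 + ξ ^ 2) ^ (-(3:ℝ)/2) * (B + α ^ 2 * ξ ^ 2) ^ (-(1:ℝ)/2)) ξ := by
  have hu : (0:ℝ) < 1 + ξ ^ 2 := by positivity
  have hv : (0:ℝ) < B + α ^ 2 * ξ ^ 2 := by positivity
  have hu' : HasDerivAt (fun ξ : ℝ => 1 + ξ ^ 2) (2 * ξ) ξ := by
    have := (hasDerivAt_pow 2 ξ).const_add (1:ℝ)
    simpa using this
  have hv' : HasDerivAt (fun ξ : ℝ => B + α ^ 2 * ξ ^ 2) (2 * α ^ 2 * ξ) ξ := by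
    have := ((hasDerivAt_pow 2 ξ).const_mul (α ^ 2)).const_add B
    exact this.congr_deriv (by ring)
  have h1 := hv'.rpow_const (p := (1:ℝ)/2) (Or.inl hv.ne')
  have h2 := hu'.rpow_const (p := -(1:ℝ)/2) (Or.inl hu.ne')
  have h3 := (h1.mul h2)
  have h4 := ((hasDerivAt_id ξ).const_mul c).sub h3
  convert h4 using 1
  case e'_4 => rfl
  case e'_5 => rfl
  case e'_8 => rfl
  have e1 : (1:ℝ)/2 - 1 = -(1:ℝ)/2 := by norm_num
  have e2 : -(1:ℝ)/2 - 1 = -(3:ℝ)/2 := by norm_num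
  rw [e1, e2]
  have r1 : (B + α ^ 2 * ξ ^ 2) ^ ((1:ℝ)/2) =
      (B + α ^ 2 * ξ ^ 2) * (B + α ^ 2 * ξ ^ 2) ^ (-(1:ℝ)/2) := by
    rw [← rpow_succ' _ hv]; norm_num
  have r2 : (1 + ξ ^ 2) ^ (-(1:ℝ)/2) = (1 + ξ ^ 2) * (1 + ξ ^ 2) ^ (-(3:ℝ)/2) := by
    rw [← rpow_succ' _ hu]; norm_num
  rw [r1, r2]
  ring

private lemma step2 (B α c : ℝ) (hB : 0 < B) (ξ : ℝ) :
    HasDerivAt (fun ξ : ℝ =>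
        c - (α ^ 2 - B) * ξ * (1 + ξ ^ 2) ^ (-(3:ℝ)/2) * (B + α ^ 2 * ξ ^ 2) ^ (-(1:ℝ)/2))
      ((B - α ^ 2) * (-3 * α ^ 2 * ξ ^ 4 - 2 * B * ξ ^ 2 + B) *
        ((1 + ξ ^ 2) ^ (-(5:ℝ)/2) * (B + α ^ 2 * ξ ^ 2) ^ (-(3:ℝ)/2))) ξ := by
  have hu : (0:ℝ) < 1 + ξ ^ 2 := by positivity
  have hv : (0:ℝ) < B + α ^ 2 * ξ ^ 2 := by positivity
  have hu' : HasDerivAt (fun ξ : ℝ => 1 + ξ ^ 2) (2 * ξ) ξ := by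
    have := (hasDerivAt_pow 2 ξ).const_add (1:ℝ)
    simpa using this
  have hv' : HasDerivAt (fun ξ : ℝ => B + α ^ 2 * ξ ^ 2) (2 * α ^ 2 * ξ) ξ := by
    have := ((hasDerivAt_pow 2 ξ).const_mul (α ^ 2)).const_add B
    exact this.congr_deriv (by ring)
  have h1 := hu'.rpow_const (p := -(3:ℝ)/2) (Or.inl hu.ne')
  have h2 := hv'.rpow_const (p := -(1:ℝ)/2) (Or.inl hv.ne')
  have hf : HasDerivAt (fun ξ : ℝ => (α ^ 2 - B) * ξ) (α ^ 2 - B) ξ := by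
    simpa using (hasDerivAt_id ξ).const_mul (α ^ 2 - B)
  have h3 := ((hf.mul h1).mul h2).const_sub c
  convert h3 using 1
  case e'_4 => rfl
  case e'_5 => rfl
  case e'_8 => rfl
  simp only [Pi.mul_apply]
  have e1 : -(3:ℝ)/2 - 1 = -(5:ℝ)/2 := by norm_num
  have e2 : -(1:ℝ)/2 - 1 = -(3:ℝ)/2 := by norm_num
  rw [e1, e2]
  have r1 : (1 + ξ ^ 2) ^ (-(3:ℝ)/2) = (1 + ξ ^ 2) * (1 + ξ ^ 2) ^ (-(5:ℝ)/2) := by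
    rw [← rpow_succ' _ hu]; norm_num
  have r2 : (B + α ^ 2 * ξ ^ 2) ^ (-(1:ℝ)/2) =
      (B + α ^ 2 * ξ ^ 2) * (B + α ^ 2 * ξ ^ 2) ^ (-(3:ℝ)/2) := by
    rw [← rpow_succ' _ hv]; norm_num
  rw [r1, r2]
  ring

theorem stmt_5 (α β c : ℝ) (hα : 0 < α) (hB : 0 < β * (β - 1))
    (Φ : ℝ → ℝ)
    (hΦ : ∀ ξ : ℝ, Φ ξ = c * ξ - Real.sqrt ((β * (β - 1) + α ^ 2 * ξ ^ 2) / (1 + ξ ^ 2))) :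
    Differentiable ℝ Φ ∧ Differentiable ℝ (deriv Φ) ∧
    ∀ ξ : ℝ, deriv (deriv Φ) ξ =
      (β * (β - 1) - α ^ 2) *
        (-3 * α ^ 2 * ξ ^ 4 - 2 * (β * (β - 1)) * ξ ^ 2 + β * (β - 1)) /
        ((1 + ξ ^ 2) ^ ((5 : ℝ) / 2) * (β * (β - 1) + α ^ 2 * ξ ^ 2) ^ ((3 : ℝ) / 2)) := by
  set B := β * (β - 1) with hBdef
  have hΦfun : Φ = fun ξ : ℝ =>
      c * ξ - (B + α ^ 2 * ξ ^ 2) ^ ((1:ℝ)/2) * (1 + ξ ^ 2) ^ (-(1:ℝ)/2) := by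
    funext ξ
    have hu : (0:ℝ) < 1 + ξ ^ 2 := by positivity
    have hv : (0:ℝ) < B + α ^ 2 * ξ ^ 2 := by positivity
    rw [hΦ, Real.sqrt_eq_rpow, Real.div_rpow hv.le hu.le]
    rw [div_eq_mul_inv, ← Real.rpow_neg hu.le]
    norm_num
  have hD1 : ∀ ξ : ℝ, HasDerivAt Φ
      (c - (α ^ 2 - B) * ξ * (1 + ξ ^ 2) ^ (-(3:ℝ)/2) * (B + α ^ 2 * ξ ^ 2) ^ (-(1:ℝ)/2)) ξ := by
    intro ξ; rw [hΦfun]; exact step1 B α c hB ξ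
  have hderiv1 : deriv Φ = fun ξ : ℝ =>
      c - (α ^ 2 - B) * ξ * (1 + ξ ^ 2) ^ (-(3:ℝ)/2) * (B + α ^ 2 * ξ ^ 2) ^ (-(1:ℝ)/2) := by
    funext ξ; exact (hD1 ξ).deriv
  have hD2 : ∀ ξ : ℝ, HasDerivAt (deriv Φ)
      ((B - α ^ 2) * (-3 * α ^ 2 * ξ ^ 4 - 2 * B * ξ ^ 2 + B) *
        ((1 + ξ ^ 2) ^ (-(5:ℝ)/2) * (B + α ^ 2 * ξ ^ 2) ^ (-(3:ℝ)/2))) ξ := by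
    intro ξ; rw [hderiv1]; exact step2 B α c hB ξ
  refine ⟨fun ξ => (hD1 ξ).differentiableAt, fun ξ => (hD2 ξ).differentiableAt, fun ξ => ?_⟩
  have hu : (0:ℝ) < 1 + ξ ^ 2 := by positivity
  have hv : (0:ℝ) < B + α ^ 2 * ξ ^ 2 := by positivity
  rw [(hD2 ξ).deriv]
  rw [show (-(5:ℝ)/2) = -((5:ℝ)/2) by norm_num, show (-(3:ℝ)/2) = -((3:ℝ)/2) by norm_num,
    Real.rpow_neg hu.le, Real.rpow_neg hv.le]
  field_simp
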